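/- Let I and J be finite types and let m₁ : I → ℝ and m₂ : J → ℝ be nonnegative functions with ∑_i m₁(i) = 1 and ∑_j m₂(j) = 1. Define the entropy H(f) = ∑_{(i,j)} −f(i,j)·ln f(i,j) (with the convention 0·ln 0 = 0). Then the product function f₀(i,j) = m₁(i)·m₂(j) maximizes H among all f : I × J → ℝ satisfying f ≥ 0, ∑_i f(i,j) = m₂(j) for all j, and ∑_j f(i,j) = m₁(i) for all i; that is, for every such f, H(f) ≤ H(f₀). -/
import Mathlib

/-- Pointwise Gibbs inequality: for `a ≥ 0` and `b > 0`,
`-a·ln a ≤ b - a - a·ln b`. -/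
lemma gibbs_pointwise (a b : ℝ) (ha : 0 ≤ a) (hb : 0 < b) :
    -(a * Real.log a) ≤ b - a - a * Real.log b := by
  rcases eq_or_lt_of_le ha with h | ha
  · simp [← h]; linarith
  · have hx : (0:ℝ) < b / a := div_pos hb ha
    have := Real.log_le_sub_one_of_pos hx
    have hlog : Real.log (b / a) = Real.log b - Real.log a :=
      Real.log_div (ne_of_gt hb) (ne_of_gt ha)
    have hmul : a * Real.log (b / a) ≤ a * (b / a - 1) :=
      mul_le_mul_of_nonneg_left this ha.le
    have : a * (b / a - 1) = b - a := by field_simp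
    nlinarith [hmul, hlog]

/-- The product `f₀(i,j) = m₁(i)·m₂(j)` maximizes the entropy
`H(f) = ∑ −f(i,j)·ln f(i,j)` among all nonnegative `f` with marginals `m₁`, `m₂`.
(The convention `0·ln 0 = 0` holds automatically since `Real.log 0 = 0`.) -/
theorem product_maximizes_entropy {I J : Type*} [Fintype I] [Fintype J]
    (m₁ : I → ℝ) (m₂ : J → ℝ)
    (hm₁ : ∀ i, 0 ≤ m₁ i) (hm₂ : ∀ j, 0 ≤ m₂ j)
    (hs₁ : ∑ i, m₁ i = 1) (hs₂ : ∑ j, m₂ j = 1)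
    (f : I × J → ℝ)
    (hf : ∀ q, 0 ≤ f q)
    (hmarg₂ : ∀ j, ∑ i, f (i, j) = m₂ j)
    (hmarg₁ : ∀ i, ∑ j, f (i, j) = m₁ i) :
    ∑ q : I × J, -(f q * Real.log (f q)) ≤
      ∑ q : I × J, -(m₁ q.1 * m₂ q.2 * Real.log (m₁ q.1 * m₂ q.2)) := by
  set g : I × J → ℝ := fun q => m₁ q.1 * m₂ q.2 with hg
  -- f is dominated by the marginals
  have hle₁ : ∀ q : I × J, f q ≤ m₁ q.1 := by
    rintro ⟨i, j⟩
    calc f (i, j) ≤ ∑ j', f (i, j') :=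
          Finset.single_le_sum (fun j' _ => hf (i, j')) (Finset.mem_univ j)
      _ = m₁ i := hmarg₁ i
  have hle₂ : ∀ q : I × J, f q ≤ m₂ q.2 := by
    rintro ⟨i, j⟩
    calc f (i, j) ≤ ∑ i', f (i', j) :=
          Finset.single_le_sum (fun i' _ => hf (i', j)) (Finset.mem_univ i)
      _ = m₂ j := hmarg₂ j
  -- if g q = 0, then f q = 0
  have hzero : ∀ q : I × J, g q = 0 → f q = 0 := by
    intro q hq
    rcases mul_eq_zero.mp hq with h | h
    · exact le_antisymm (h ▸ hle₁ q) (hf q)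
    · exact le_antisymm (h ▸ hle₂ q) (hf q)
  -- Step 1: Gibbs inequality summed over all q
  have step1 : ∑ q : I × J, -(f q * Real.log (f q)) ≤
      ∑ q : I × J, (g q - f q - f q * Real.log (g q)) := by
    apply Finset.sum_le_sum
    intro q _
    rcases eq_or_lt_of_le (mul_nonneg (hm₁ q.1) (hm₂ q.2)) with h | h
    · have hfq : f q = 0 := hzero q h.symm
      simp [hfq, hg, ← h]
    · exact gibbs_pointwise (f q) (g q) (hf q) h
  -- ∑ g = 1 and ∑ f = 1
  have hsg : ∑ q : I × J, g q = 1 := by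
    rw [Fintype.sum_prod_type]
    simp only [hg, ← Finset.mul_sum, hs₂, mul_one, hs₁]
  have hsf : ∑ q : I × J, f q = 1 := by
    rw [Fintype.sum_prod_type]
    simp only [hmarg₁, hs₁]
  -- Step 2: cross entropy equals entropy of g
  have step2 : ∑ q : I × J, f q * Real.log (g q) =
      ∑ q : I × J, g q * Real.log (g q) := by
    have hsplit : ∀ (h : I × J → ℝ), (∀ q, h q = 0 ∨ (0 < m₁ q.1 ∧ 0 < m₂ q.2)) →
        ∑ q : I × J, h q * Real.log (g q) =
        ∑ q : I × J, h q * Real.log (m₁ q.1) + ∑ q : I × J, h q * Real.log (m₂ q.2) := by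
      intro h hh
      rw [← Finset.sum_add_distrib]
      apply Finset.sum_congr rfl
      intro q _
      rcases hh q with h0 | ⟨h1, h2⟩
      · simp [h0]
      · rw [hg, Real.log_mul (ne_of_gt h1) (ne_of_gt h2)]; ring
    have hfcase : ∀ q : I × J, f q = 0 ∨ (0 < m₁ q.1 ∧ 0 < m₂ q.2) := by
      intro q
      rcases eq_or_lt_of_le (hf q) with h | h
      · exact Or.inl h.symm
      · exact Or.inr ⟨lt_of_lt_of_le h (hle₁ q), lt_of_lt_of_le h (hle₂ q)⟩
    have hgcase : ∀ q : I × J, g q = 0 ∨ (0 < m₁ q.1 ∧ 0 < m₂ q.2) := by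
      intro q
      rcases eq_or_lt_of_le (mul_nonneg (hm₁ q.1) (hm₂ q.2)) with h | h
      · exact Or.inl h.symm
      · rcases mul_pos_iff.mp h with ⟨h1, h2⟩ | ⟨h1, _⟩
        · exact Or.inr ⟨h1, h2⟩
        · exact absurd h1 (not_lt.mpr (hm₁ q.1))
    rw [hsplit f hfcase, hsplit g hgcase]
    congr 1
    · rw [Fintype.sum_prod_type, Fintype.sum_prod_type]
      apply Finset.sum_congr rfl
      intro i _
      simp only [hg]
      rw [← Finset.sum_mul, hmarg₁]
      have : ∑ x : J, m₁ i * m₂ x * Real.log (m₁ i)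
          = (∑ x : J, m₂ x) * (m₁ i * Real.log (m₁ i)) := by
        rw [Finset.sum_mul]
        exact Finset.sum_congr rfl fun x _ => by ring
      rw [this, hs₂, one_mul]
    · rw [Fintype.sum_prod_type_right, Fintype.sum_prod_type_right]
      apply Finset.sum_congr rfl
      intro j _
      simp only [hg]
      rw [← Finset.sum_mul, hmarg₂]
      have : ∑ x : I, m₁ x * m₂ j * Real.log (m₂ j)
          = (∑ x : I, m₁ x) * (m₂ j * Real.log (m₂ j)) := by
        rw [Finset.sum_mul]
        exact Finset.sum_congr rfl fun x _ => by ring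
      rw [this, hs₁, one_mul]
  have step3 : ∑ q : I × J, (g q - f q - f q * Real.log (g q))
      = ∑ q : I × J, -(g q * Real.log (g q)) := by
    rw [Finset.sum_sub_distrib, Finset.sum_sub_distrib, hsg, hsf, step2]
    simp
  calc ∑ q : I × J, -(f q * Real.log (f q))
      ≤ ∑ q : I × J, (g q - f q - f q * Real.log (g q)) := step1
    _ = ∑ q : I × J, -(g q * Real.log (g q)) := step3
    _ = ∑ q : I × J, -(m₁ q.1 * m₂ q.2 * Real.log (m₁ q.1 * m₂ q.2)) := rfl
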